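/- Let φ : ℝ³ → ℝ be C³, and suppose that the function ℓ := i·(L(Ā) − L̄(A)) vanishes nowhere on ℝ³. Define the operator T f := ℓ·f_u and the function P := ( L(ℓ) + T( φ_z/(i + φ_u) ) ) / ℓ. Then for every C² function f : ℝ³ → ℂ: (i) L(L̄ f) − L̄(L f) = −i · T f; (ii) L(T f) − T(L f) = P · T f; (iii) L̄(T f) − T(L̄ f) = conj(P) · T f. (This is the Lie structure [L, L̄] = −i T, [L, T] = P·T, [L̄, T] = P̄·T of the frame {L, L̄, T} for a hypersurface M³ ⊂ ℂ² of General Class I.) -/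

import Mathlib

noncomputable section
open Complex ComplexConjugate

/-- Points of `ℝ³`, with coordinates `(x, y, u)` and `z = x + i y`. -/
abbrev V3 := Fin 3 → ℝ

/-- Partial derivative in the `j`-th coordinate direction. -/
def pd (j : Fin 3) (f : V3 → ℂ) : V3 → ℂ := fun p => fderiv ℝ f p (Pi.single j 1)

/-- Wirtinger derivative `f_z := (f_x − i f_y)/2`. -/
def wz (f : V3 → ℂ) : V3 → ℂ := fun p => (pd 0 f p - I * pd 1 f p) / 2

/-- Wirtinger derivative `f_z̄ := (f_x + i f_y)/2`. -/
def wzb (f : V3 → ℂ) : V3 → ℂ := fun p => (pd 0 f p + I * pd 1 f p) / 2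

/-- Partial derivative `f_u`. -/
def du (f : V3 → ℂ) : V3 → ℂ := pd 2 f

/-- Complexification of a real-valued function. -/
def cl (φ : V3 → ℝ) : V3 → ℂ := fun p => (φ p : ℂ)

/-- The coefficient `A := −φ_z/(i + φ_u)`. -/
def Afun (φ : V3 → ℝ) : V3 → ℂ := fun p => -(wz (cl φ) p) / (I + du (cl φ) p)

/-- The operator `L f := f_z + A·f_u`. -/
def Lop (φ : V3 → ℝ) (f : V3 → ℂ) : V3 → ℂ := fun p => wz f p + Afun φ p * du f p

/-- The conjugate operator `L̄ f := f_z̄ + Ā·f_u`. -/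
def Lbop (φ : V3 → ℝ) (f : V3 → ℂ) : V3 → ℂ :=
  fun p => wzb f p + conj (Afun φ p) * du f p

/-- The function `ℓ := i·(L(Ā) − L̄(A))`. -/
def ell (φ : V3 → ℝ) : V3 → ℂ := fun p =>
  I * (Lop φ (fun q => conj (Afun φ q)) p - Lbop φ (Afun φ) p)

/-- The operator `T f := ℓ·f_u`. -/
def Tof (φ : V3 → ℝ) (f : V3 → ℂ) : V3 → ℂ := fun p => ell φ p * du f p

/-- The function `P := ( L(ℓ) + T( φ_z/(i + φ_u) ) ) / ℓ`. -/
def Pfun (φ : V3 → ℝ) : V3 → ℂ := fun p =>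
  (Lop φ (ell φ) p + Tof φ (fun q => wz (cl φ) q / (I + du (cl φ) q)) p) / ell φ p


section Aux
variable {f g : V3 → ℂ} {p : V3} {j : Fin 3} {c : ℂ}


lemma pd_apply : pd j f p = fderiv ℝ f p (Pi.single j 1) := rfl

lemma pd_add (hf : DifferentiableAt ℝ f p) (hg : DifferentiableAt ℝ g p) :
    pd j (fun q => f q + g q) p = pd j f p + pd j g p := by
  simp [pd_apply, fderiv_fun_add hf hg]

lemma pd_neg : pd j (fun q => -f q) p = -pd j f p := by
  simp [pd_apply, fderiv_neg]

lemma pd_mul (hf : DifferentiableAt ℝ f p) (hg : DifferentiableAt ℝ g p) :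
    pd j (fun q => f q * g q) p = pd j f p * g p + f p * pd j g p := by
  simp [pd_apply, fderiv_fun_mul hf hg]; ring

lemma pd_const_mul (hf : DifferentiableAt ℝ f p) :
    pd j (fun q => c * f q) p = c * pd j f p := by
  simp [pd_apply, fderiv_const_mul hf]

lemma pd_div_const (hf : DifferentiableAt ℝ f p) :
    pd j (fun q => f q / c) p = pd j f p / c := by
  simp only [div_eq_mul_inv, pd_apply, fderiv_mul_const hf]
  simp [mul_comm]

lemma pd_conj : pd j (fun q => conj (f q)) p = conj (pd j f p) := by
  simp only [pd_apply, show (starRingEnd ℂ) = (star : ℂ → ℂ) from rfl, fderiv_star,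
    ContinuousLinearMap.coe_comp', Function.comp_apply]
  rfl

lemma pd_contDiff {n m : WithTop ℕ∞} (hf : ContDiff ℝ n f) (h : m + 1 ≤ n) :
    ContDiff ℝ m (pd j f) :=
  (hf.fderiv_right h).clm_apply contDiff_const

lemma pd_comm (hf : ContDiff ℝ 2 f) (i j : Fin 3) (p : V3) :
    pd i (pd j f) p = pd j (pd i f) p := by
  have hdf : DifferentiableAt ℝ (fderiv ℝ f) p :=
    ((hf.fderiv_right (m := 1) (by norm_num)).differentiable one_ne_zero) p
  have h1 : ∀ (v w : V3), fderiv ℝ (fun q => fderiv ℝ f q v) p w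
      = fderiv ℝ (fderiv ℝ f) p w v := by
    intro v w
    rw [fderiv_clm_apply hdf (differentiableAt_const v)]
    simp
  have hsym := (hf.contDiffAt (x := p)).isSymmSndFDerivAt (by simp [minSmoothness_of_isRCLikeNormedField])
  show fderiv ℝ (fun q => fderiv ℝ f q (Pi.single j 1)) p (Pi.single i 1)
      = fderiv ℝ (fun q => fderiv ℝ f q (Pi.single i 1)) p (Pi.single j 1)
  rw [h1, h1, hsym]

-- ContDiff of the operators

lemma wz_contDiff {n m : WithTop ℕ∞} (hf : ContDiff ℝ n f) (h : m + 1 ≤ n) :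
    ContDiff ℝ m (wz f) :=
  (((pd_contDiff hf h).sub (contDiff_const.mul (pd_contDiff hf h))).div_const 2)

lemma wzb_contDiff {n m : WithTop ℕ∞} (hf : ContDiff ℝ n f) (h : m + 1 ≤ n) :
    ContDiff ℝ m (wzb f) :=
  (((pd_contDiff hf h).add (contDiff_const.mul (pd_contDiff hf h))).div_const 2)

lemma du_contDiff {n m : WithTop ℕ∞} (hf : ContDiff ℝ n f) (h : m + 1 ≤ n) :
    ContDiff ℝ m (du f) := pd_contDiff hf h

lemma contDiff_conj {n : WithTop ℕ∞} (hf : ContDiff ℝ n f) :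
    ContDiff ℝ n (fun q => conj (f q)) := by
  have := ((Complex.conjCLE : ℂ ≃L[ℝ] ℂ).toContinuousLinearMap.contDiff (n := n)).comp hf
  exact this

-- algebraic rules
lemma wz_add (hf : DifferentiableAt ℝ f p) (hg : DifferentiableAt ℝ g p) :
    wz (fun q => f q + g q) p = wz f p + wz g p := by
  simp only [wz, pd_add hf hg]; ring

lemma wzb_add (hf : DifferentiableAt ℝ f p) (hg : DifferentiableAt ℝ g p) :
    wzb (fun q => f q + g q) p = wzb f p + wzb g p := by
  simp only [wzb, pd_add hf hg]; ring

lemma du_add (hf : DifferentiableAt ℝ f p) (hg : DifferentiableAt ℝ g p) :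
    du (fun q => f q + g q) p = du f p + du g p := pd_add hf hg

lemma wz_mul (hf : DifferentiableAt ℝ f p) (hg : DifferentiableAt ℝ g p) :
    wz (fun q => f q * g q) p = wz f p * g p + f p * wz g p := by
  simp only [wz, pd_mul hf hg]; ring

lemma wzb_mul (hf : DifferentiableAt ℝ f p) (hg : DifferentiableAt ℝ g p) :
    wzb (fun q => f q * g q) p = wzb f p * g p + f p * wzb g p := by
  simp only [wzb, pd_mul hf hg]; ring

lemma du_mul (hf : DifferentiableAt ℝ f p) (hg : DifferentiableAt ℝ g p) :
    du (fun q => f q * g q) p = du f p * g p + f p * du g p := pd_mul hf hg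

lemma du_neg : du (fun q => -f q) p = -du f p := pd_neg

-- conjugation rules
lemma wz_conj : wzb (fun q => conj (f q)) p = conj (wz f p) := by
  simp only [wz, wzb, pd_conj, map_div₀, map_sub, map_mul, Complex.conj_I, map_ofNat]
  ring

lemma wzb_conj : wz (fun q => conj (f q)) p = conj (wzb f p) := by
  simp only [wz, wzb, pd_conj, map_div₀, map_add, map_mul, Complex.conj_I, map_ofNat]
  ring

lemma du_conj : du (fun q => conj (f q)) p = conj (du f p) := pd_conj

-- commutation rules (Clairaut)
lemma du_wz (hf : ContDiff ℝ 2 f) : du (wz f) p = wz (du f) p := by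
  have h1 : DifferentiableAt ℝ (pd 0 f) p :=
    ((pd_contDiff (m := 1) hf (by norm_num)).differentiable one_ne_zero) p
  have h2 : DifferentiableAt ℝ (pd 1 f) p :=
    ((pd_contDiff (m := 1) hf (by norm_num)).differentiable one_ne_zero) p
  show pd 2 (fun q => (pd 0 f q - I * pd 1 f q) / 2) p = _
  rw [show (fun q => (pd 0 f q - I * pd 1 f q) / 2)
      = fun q => (pd 0 f q + -(I * pd 1 f q)) / 2 by funext q; ring]
  rw [pd_div_const (by exact (h1.add ((differentiableAt_const I).mul h2).neg)),
    pd_add h1 (by exact ((differentiableAt_const I).mul h2).neg), pd_neg,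
    pd_const_mul h2]
  simp only [wz, du, pd_comm hf 2 0, pd_comm hf 2 1]
  ring

lemma du_wzb (hf : ContDiff ℝ 2 f) : du (wzb f) p = wzb (du f) p := by
  have h1 : DifferentiableAt ℝ (pd 0 f) p :=
    ((pd_contDiff (m := 1) hf (by norm_num)).differentiable one_ne_zero) p
  have h2 : DifferentiableAt ℝ (pd 1 f) p :=
    ((pd_contDiff (m := 1) hf (by norm_num)).differentiable one_ne_zero) p
  show pd 2 (fun q => (pd 0 f q + I * pd 1 f q) / 2) p = _
  rw [pd_div_const (by exact h1.add ((differentiableAt_const I).mul h2)),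
    pd_add h1 (by exact (differentiableAt_const I).mul h2), pd_const_mul h2]
  simp only [wzb, du, pd_comm hf 2 0, pd_comm hf 2 1]

lemma wz_wzb (hf : ContDiff ℝ 2 f) : wz (wzb f) p = wzb (wz f) p := by
  have h1 : DifferentiableAt ℝ (pd 0 f) p :=
    ((pd_contDiff (m := 1) hf (by norm_num)).differentiable one_ne_zero) p
  have h2 : DifferentiableAt ℝ (pd 1 f) p :=
    ((pd_contDiff (m := 1) hf (by norm_num)).differentiable one_ne_zero) p
  show wz (fun q => (pd 0 f q + I * pd 1 f q) / 2) p
      = wzb (fun q => (pd 0 f q - I * pd 1 f q) / 2) p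
  have e1 : ∀ i : Fin 3, pd i (fun q => (pd 0 f q + I * pd 1 f q) / 2) p
      = (pd i (pd 0 f) p + I * pd i (pd 1 f) p) / 2 := by
    intro i
    rw [pd_div_const (by exact h1.add ((differentiableAt_const I).mul h2)),
      pd_add h1 (by exact (differentiableAt_const I).mul h2), pd_const_mul h2]
  have e2 : ∀ i : Fin 3, pd i (fun q => (pd 0 f q - I * pd 1 f q) / 2) p
      = (pd i (pd 0 f) p - I * pd i (pd 1 f) p) / 2 := by
    intro i
    rw [show (fun q => (pd 0 f q - I * pd 1 f q) / 2)
        = fun q => (pd 0 f q + -(I * pd 1 f q)) / 2 by funext q; ring]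
    rw [pd_div_const (by exact h1.add ((differentiableAt_const I).mul h2).neg),
      pd_add h1 (by exact ((differentiableAt_const I).mul h2).neg), pd_neg,
      pd_const_mul h2]
    ring
  simp only [wz, wzb, e1, e2, pd_comm hf 1 0]
  ring

lemma Lop_def (φ : V3 → ℝ) (f : V3 → ℂ) :
    Lop φ f = fun p => wz f p + Afun φ p * du f p := rfl
lemma Lbop_def (φ : V3 → ℝ) (f : V3 → ℂ) :
    Lbop φ f = fun p => wzb f p + conj (Afun φ p) * du f p := rfl
lemma Tof_def (φ : V3 → ℝ) (f : V3 → ℂ) :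
    Tof φ f = fun p => ell φ p * du f p := rfl

end Aux

/-- Lie structure `[L, L̄] = −i T`, `[L, T] = P·T`, `[L̄, T] = P̄·T` of the frame
`{L, L̄, T}` for a hypersurface `M³ ⊂ ℂ²` of General Class I. -/
theorem class_I_lie_structure (φ : V3 → ℝ) (hφ : ContDiff ℝ 3 φ)
    (hℓ : ∀ p, ell φ p ≠ 0) :
    ∀ f : V3 → ℂ, ContDiff ℝ 2 f → ∀ p,
      (Lop φ (Lbop φ f) p - Lbop φ (Lop φ f) p = -I * Tof φ f p) ∧
      (Lop φ (Tof φ f) p - Tof φ (Lop φ f) p = Pfun φ p * Tof φ f p) ∧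
      (Lbop φ (Tof φ f) p - Tof φ (Lbop φ f) p = conj (Pfun φ p) * Tof φ f p) := by
  have h12 : (1 : WithTop ℕ∞) + 1 ≤ 2 := by norm_num
  have h23 : (2 : WithTop ℕ∞) + 1 ≤ 3 := by norm_num
  have hcl : ContDiff ℝ 3 (cl φ) := Complex.ofRealCLM.contDiff.comp hφ
  have hwzφ : ContDiff ℝ 2 (wz (cl φ)) := wz_contDiff hcl h23
  have hduφ : ContDiff ℝ 2 (du (cl φ)) := du_contDiff hcl h23
  have hclconj : (fun r => conj (cl φ r)) = cl φ := funext fun r => Complex.conj_ofReal _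
  have hdureal : ∀ q, conj (du (cl φ) q) = du (cl φ) q := by
    intro q; rw [← du_conj, hclconj]
  have hden : ∀ q, I + du (cl φ) q ≠ 0 := by
    intro q h
    have him : (I + du (cl φ) q).im = 0 := by rw [h]; simp
    have h2 : (du (cl φ) q).im = 0 := Complex.conj_eq_iff_im.mp (hdureal q)
    simp [Complex.add_im, Complex.I_im, h2] at him
  have hA : ContDiff ℝ 2 (Afun φ) := by
    have h := hwzφ.neg.mul ((contDiff_const.add hduφ).inv hden)
    show ContDiff ℝ 2 (fun p => -(wz (cl φ) p) / (I + du (cl φ) p))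
    simpa only [Afun, div_eq_mul_inv, Pi.inv_apply] using h
  have hAb : ContDiff ℝ 2 (fun q => conj (Afun φ q)) := contDiff_conj hA
  have hl : ContDiff ℝ 1 (ell φ) := by
    have hL : ContDiff ℝ 1 (Lop φ (fun q => conj (Afun φ q))) :=
      (wz_contDiff hAb h12).add ((hA.of_le one_le_two).mul (du_contDiff hAb h12))
    have hLb : ContDiff ℝ 1 (Lbop φ (Afun φ)) :=
      (wzb_contDiff hA h12).add ((hAb.of_le one_le_two).mul (du_contDiff hA h12))
    exact contDiff_const.mul (hL.sub hLb)
  have d4 : Differentiable ℝ (Afun φ) := (hA.of_le one_le_two).differentiable one_ne_zero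
  have d5 : Differentiable ℝ (fun q => conj (Afun φ q)) :=
    (hAb.of_le one_le_two).differentiable one_ne_zero
  have d8 : Differentiable ℝ (ell φ) := hl.differentiable one_ne_zero
  -- reality of ℓ
  have hlreal : ∀ q, conj (ell φ q) = ell φ q := by
    intro q
    simp only [ell, Lop_def, Lbop_def, map_mul, map_sub, map_add, Complex.conj_I,
      ← wz_conj, ← wzb_conj, ← du_conj, Complex.conj_conj]
    ring
  have hconjl : (fun q => conj (ell φ q)) = ell φ := funext hlreal
  intro f hf p
  have d1 : Differentiable ℝ (wzb f) := (wzb_contDiff hf h12).differentiable one_ne_zero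
  have d2 : Differentiable ℝ (wz f) := (wz_contDiff hf h12).differentiable one_ne_zero
  have d3 : Differentiable ℝ (du f) := (du_contDiff hf h12).differentiable one_ne_zero
  have d6 : Differentiable ℝ (fun q => conj (Afun φ q) * du f q) := d5.mul d3
  have d7 : Differentiable ℝ (fun q => Afun φ q * du f q) := d4.mul d3
  have d9 : Differentiable ℝ (fun q => ell φ q * du f q) := d8.mul d3
  have hg : du (fun q => wz (cl φ) q / (I + du (cl φ) q)) p = - du (Afun φ) p := by
    rw [show (fun q => wz (cl φ) q / (I + du (cl φ) q)) = (fun q => -Afun φ q) from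
      funext fun q => by simp [Afun, neg_div], du_neg]
  refine ⟨?_, ?_, ?_⟩
  · -- part (i)
    have hX : wz (fun q => conj (Afun φ q)) p + Afun φ p * du (fun q => conj (Afun φ q)) p
        - (wzb (Afun φ) p + conj (Afun φ p) * du (Afun φ) p) = -I * ell φ p := by
      simp only [ell, Lop_def, Lbop_def]
      linear_combination (wz (fun q => conj (Afun φ q)) p
        + Afun φ p * du (fun q => conj (Afun φ q)) p
        - (wzb (Afun φ) p + conj (Afun φ p) * du (Afun φ) p)) * Complex.I_mul_I
    simp only [Lop_def, Lbop_def, Tof_def]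
    simp only [wz_add (d1 p) (d6 p), wz_mul (d5 p) (d3 p), du_add (d1 p) (d6 p),
      du_mul (d5 p) (d3 p), wzb_add (d2 p) (d7 p), wzb_mul (d4 p) (d3 p),
      du_add (d2 p) (d7 p), du_mul (d4 p) (d3 p), wz_wzb hf, du_wz hf, du_wzb hf]
    linear_combination du f p * hX
  · -- part (ii)
    have hP' : Pfun φ p * ell φ p = wz (ell φ) p + Afun φ p * du (ell φ) p
        - ell φ p * du (Afun φ) p := by
      simp only [Pfun, Lop_def, Tof_def, hg]
      rw [div_mul_cancel₀ _ (hℓ p)]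
      ring
    simp only [Lop_def, Tof_def]
    simp only [wz_mul (d8 p) (d3 p), du_mul (d8 p) (d3 p), du_add (d2 p) (d7 p),
      du_mul (d4 p) (d3 p), du_wz hf]
    linear_combination (-du f p) * hP'
  · -- part (iii)
    have hPb' : conj (Pfun φ p) * ell φ p = wzb (ell φ) p
        + conj (Afun φ p) * du (ell φ) p
        - ell φ p * du (fun q => conj (Afun φ q)) p := by
      simp only [Pfun, Lop_def, Tof_def, hg, map_div₀, map_add, map_mul, map_neg,
        ← wz_conj, ← du_conj, hconjl, hlreal p]
      rw [div_mul_cancel₀ _ (hℓ p)]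
      ring
    simp only [Lbop_def, Tof_def]
    simp only [wzb_mul (d8 p) (d3 p), du_mul (d8 p) (d3 p), du_add (d1 p) (d6 p),
      du_mul (d5 p) (d3 p), du_wzb hf]
    linear_combination (-du f p) * hPb'
end
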